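/- Let E be a Euclidean space of dimension n, ξ ∈ E* nonzero, m ≥ 0, and let f be a smooth function on S^{n-2}_ξ with a nonzero spherical harmonic component of degree ≥ m+1. Then the extension E^m_ξ f (defined by E^m_ξ f(cos φ · n(ξ) + sin φ · u) = sin^m(φ) f(u)) has a nonzero spherical harmonic component of degree ≥ m+1 on S^{n-1}. Equivalently: if E^m_ξ f is a sum of spherical harmonics of degree ≤ m on S^{n-1}, then f is a sum of spherical harmonics of degree ≤ m on S^{n-2}_ξ. -/
import Mathlib


open scoped RealInnerProductSpace

noncomputable section

abbrev E (n : ℕ) := EuclideanSpace ℝ (Fin n)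

def evalP {n : ℕ} (P : MvPolynomial (Fin n) ℝ) (v : E n) : ℝ :=
  MvPolynomial.eval (fun i => v i) P

def sphereS (n : ℕ) : Set (E n) := Metric.sphere 0 1

def subSphere {n : ℕ} (w : E n) : Set (E n) :=
  Metric.sphere 0 1 ∩ {v : E n | ⟪w, v⟫ = 0}

def IsDegLE {n : ℕ} (m : ℕ) (S : Set (E n)) (f : E n → ℝ) : Prop :=
  ∃ P : MvPolynomial (Fin n) ℝ, P.totalDegree ≤ m ∧ ∀ v ∈ S, f v = evalP P v

def HasCompGE {n : ℕ} : ℕ → Set (E n) → (E n → ℝ) → Prop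
  | 0, S, f => ¬ ∀ v ∈ S, f v = 0
  | (m + 1), S, f => ¬ IsDegLE m S f

def nvec {n : ℕ} (w : E n) : E n := ‖w‖⁻¹ • w

/-- The degree-`m` extension operator `E^m_ξ f (cos φ · n(ξ) + sin φ · u) = sin^m(φ) f(u)`. -/
def extOp {n : ℕ} (m : ℕ) (w : E n) (f : E n → ℝ) (v : E n) : ℝ :=
  ‖v - ⟪nvec w, v⟫ • nvec w‖ ^ m *
    f (‖v - ⟪nvec w, v⟫ • nvec w‖⁻¹ • (v - ⟪nvec w, v⟫ • nvec w))

/-- If a smooth function `f` on `S^{n-2}_ξ` has a nonzero spherical harmonic component of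
degree `≥ m + 1`, then so does its extension `E^m_ξ f` on `S^{n-1}`. -/
theorem xray_stmt14 {n m : ℕ} (hn : 2 ≤ n) (w : E n) (hw : w ≠ 0)
    (f : E n → ℝ) (hf : ContDiff ℝ (⊤ : ℕ∞) f)
    (h : HasCompGE (m + 1) (subSphere w) f) :
    HasCompGE (m + 1) (sphereS n) (extOp m w f) := by
  rintro ⟨P, hPd, hPv⟩
  refine h ⟨P, hPd, fun v hv => ?_⟩
  have hv1 : v ∈ sphereS n := hv.1
  have hvw : ⟪w, v⟫ = 0 := hv.2
  have hnv : ⟪nvec w, v⟫ = 0 := by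
    rw [nvec, real_inner_smul_left, hvw, mul_zero]
  have hnorm : ‖v‖ = 1 := by
    simpa [sphereS] using hv1
  have := hPv v hv1
  rw [extOp, hnv] at this
  simpa [hnorm] using this
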